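/- Let V = ℝ^n with 0 < 2r < n, and let v be a nonzero vector of V. Then the subspace {v ∧ z : z ∈ ⋀^{r-1} V} of ⋀^r V is self-annihilating and has dimension C(n-1, r-1). -/

import Mathlib

open ExteriorAlgebra
open Module

/-- A basis of `ℝⁿ` whose first vector is a prescribed nonzero vector. -/
lemma aux_exists_basis_head {n : ℕ} [NeZero n] (v : Fin n → ℝ) (hv : v ≠ 0) :
    ∃ b : Basis (Fin n) ℝ (Fin n → ℝ), b 0 = v := by
  have hli := LinearIndepOn.singleton (R := ℝ) (v := (id : (Fin n → ℝ) → (Fin n → ℝ))) (i := v) hv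
  let B := Basis.extend hli
  haveI := FiniteDimensional.fintypeBasisIndex B
  have hcard : Fintype.card ↑(hli.extend (Set.subset_univ _)) = n := by
    have h1 := Module.finrank_eq_card_basis B
    rw [Module.finrank_pi, Fintype.card_fin] at h1
    omega
  have hvmem : v ∈ hli.extend (Set.subset_univ _) :=
    hli.subset_extend _ (Set.mem_singleton v)
  let e0 := Fintype.equivFinOfCardEq hcard
  let e := e0.trans (Equiv.swap (e0 ⟨v, hvmem⟩) 0)
  refine ⟨B.reindex e, ?_⟩
  have he : e ⟨v, hvmem⟩ = 0 := by
    simp [e, Equiv.swap_apply_left]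
  rw [Basis.reindex_apply, ← he, Equiv.symm_apply_apply, Basis.extend_apply_self]

/-- Sandwiching a homogeneous element between two copies of `ι v` gives zero. -/
lemma aux_iota_sandwich {R M : Type*} [CommRing R] [AddCommGroup M] [Module R M]
    (v : M) {k : ℕ} {z : ExteriorAlgebra R M} (hz : z ∈ ⋀[R]^k M) :
    ι R v * z * ι R v = 0 := by
  induction hz using Submodule.pow_induction_on_left' with
  | algebraMap r =>
      rw [← Algebra.commutes r (ι R v), mul_assoc, ι_sq_zero, mul_zero]
  | add x y i hx hy ihx ihy =>
      rw [mul_add, add_mul, ihx, ihy, add_zero]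
  | mem_mul m hm i x hx ih =>
      obtain ⟨a, rfl⟩ := hm
      have hsw : ι R v * ι R a = -(ι R a * ι R v) :=
        eq_neg_of_add_eq_zero_left (ι_add_mul_swap v a)
      have key : ι R v * (ι R a * x) * ι R v = -(ι R a * (ι R v * x * ι R v)) := by
        rw [← mul_assoc, hsw]
        simp only [neg_mul, mul_assoc]
      rw [key, ih, mul_zero, neg_zero]

/-- Dual functional for a basis wedge: minor determinant of coordinates. -/
noncomputable def auxDual {n : ℕ} (b : Basis (Fin n) ℝ (Fin n → ℝ)) (r : ℕ)
    (T : {T : Finset (Fin n) // T.card = r}) : (Fin n → ℝ) [⋀^Fin r]→ₗ[ℝ] ℝ :=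
  Matrix.detRowAlternating.compLinearMap
    (LinearMap.pi fun i => b.coord (T.1.orderIsoOfFin T.2 i))

lemma auxDual_eval {n : ℕ} (b : Basis (Fin n) ℝ (Fin n → ℝ)) (r : ℕ)
    (T S : {T : Finset (Fin n) // T.card = r}) :
    auxDual b r T (fun i => b (S.1.orderIsoOfFin S.2 i)) = if S = T then 1 else 0 := by
  have hentry : ∀ j i, (LinearMap.pi fun i => b.coord (T.1.orderIsoOfFin T.2 i))
      (b (S.1.orderIsoOfFin S.2 j)) i
      = if (S.1.orderIsoOfFin S.2 j : Fin n) = (T.1.orderIsoOfFin T.2 i : Fin n) then 1 else 0 := by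
    intro j i
    simp [LinearMap.pi_apply, Basis.coord_apply, Basis.repr_self_apply, Finsupp.single_apply]
    congr
  rw [auxDual, AlternatingMap.compLinearMap_apply]
  show Matrix.det (Matrix.of fun j i => (LinearMap.pi fun i => b.coord (T.1.orderIsoOfFin T.2 i))
      (b (S.1.orderIsoOfFin S.2 j)) i) = _
  by_cases hST : S = T
  · subst hST
    rw [if_pos rfl]
    have : (Matrix.of fun j i => (LinearMap.pi fun i => b.coord (S.1.orderIsoOfFin S.2 i))
        (b (S.1.orderIsoOfFin S.2 j)) i) = (1 : Matrix (Fin r) (Fin r) ℝ) := by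
      ext j i
      rw [Matrix.of_apply, hentry j i, Matrix.one_apply]
      congr 1
      simp only [eq_iff_iff]
      constructor
      · intro h
        exact (S.1.orderIsoOfFin S.2).injective (Subtype.ext h)
      · rintro rfl; rfl
    rw [this]
    exact Matrix.det_one
  · rw [if_neg hST]
    -- there is an element of S not in T
    have hnSsubT : ¬ S.1 ⊆ T.1 := by
      intro hsub
      exact hST (Subtype.ext (Finset.eq_of_subset_of_card_le hsub (by rw [S.2, T.2])))
    obtain ⟨x, hxS, hxT⟩ := Set.not_subset.mp (by exact_mod_cast hnSsubT)
    set j := (S.1.orderIsoOfFin S.2).symm ⟨x, hxS⟩ with hj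
    apply Matrix.det_eq_zero_of_row_eq_zero j
    intro i
    rw [Matrix.of_apply, hentry j i, if_neg]
    have : (S.1.orderIsoOfFin S.2 j : Fin n) = x := by
      rw [hj, OrderIso.apply_symm_apply]
    rw [this]
    intro h
    exact hxT (h ▸ (T.1.orderIsoOfFin T.2 i).2)

lemma aux_family_li {n : ℕ} (b : Basis (Fin n) ℝ (Fin n → ℝ)) (r : ℕ) :
    LinearIndependent ℝ (ιMulti_family ℝ r (⇑b)) := by
  rw [Fintype.linearIndependent_iff]
  intro g hsum T
  let ℓ : ExteriorAlgebra ℝ (Fin n → ℝ) →ₗ[ℝ] ℝ :=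
    liftAlternating (Function.update (fun i => (0 : (Fin n → ℝ) [⋀^Fin i]→ₗ[ℝ] ℝ)) r
      (auxDual b r T))
  have happ : ∀ S, ℓ (ιMulti_family ℝ r (⇑b) S) = if S = T then 1 else 0 := by
    intro S
    rw [show ιMulti_family ℝ r (⇑b) S = ιMulti ℝ r fun i => b (S.1.orderIsoOfFin S.2 i) from rfl]
    rw [liftAlternating_apply_ιMulti, Function.update_self]
    exact auxDual_eval b r T S
  have := congrArg ℓ hsum
  rw [map_sum, map_zero] at this
  simp only [map_smul, happ, smul_eq_mul, mul_ite, mul_one, mul_zero] at this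
  rwa [Finset.sum_ite_eq' Finset.univ T g, if_pos (Finset.mem_univ T)] at this

/-- The extremal example for the Scott–Wilmer bound: for `0 < 2r < n` and a nonzero
vector `v ∈ ℝⁿ`, the subspace `{v ∧ z : z ∈ ⋀^(r-1) ℝⁿ}` of `⋀^r ℝⁿ` is
self-annihilating and has dimension `C(n-1, r-1)`. -/
theorem full_star_self_annihilating (n r : ℕ) (hr : 0 < 2 * r) (hrn : 2 * r < n)
    (v : Fin n → ℝ) (hv : v ≠ 0)
    (W : Submodule ℝ (ExteriorAlgebra ℝ (Fin n → ℝ)))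
    (hWdef : W = Submodule.map (LinearMap.mulLeft ℝ (ExteriorAlgebra.ι ℝ v))
      (⋀[ℝ]^(r - 1) (Fin n → ℝ))) :
    W ≤ ⋀[ℝ]^r (Fin n → ℝ) ∧ (∀ x ∈ W, ∀ y ∈ W, x * y = 0) ∧
      Module.finrank ℝ ↥W = (n - 1).choose (r - 1) := by
  haveI : NeZero n := ⟨by omega⟩
  obtain ⟨m, rfl⟩ : ∃ m, r = m + 1 := ⟨r - 1, by omega⟩
  rw [Nat.add_sub_cancel] at hWdef ⊢
  obtain ⟨b, hb⟩ := aux_exists_basis_head v hv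
  refine ⟨?_, ?_, ?_⟩
  · -- W is contained in the (m+1)-st exterior power
    rw [hWdef]
    rintro x ⟨z, hz, rfl⟩
    rw [LinearMap.mulLeft_apply]
    have hι : ι ℝ v ∈ ⋀[ℝ]^1 (Fin n → ℝ) := by
      rw [exteriorPower, pow_one]
      exact LinearMap.mem_range_self _ v
    have := SetLike.mul_mem_graded hι hz
    rwa [show 1 + m = m + 1 by omega] at this
  · -- self-annihilating
    rw [hWdef]
    rintro x ⟨z, hz, rfl⟩ y ⟨z', hz', rfl⟩
    simp only [LinearMap.mulLeft_apply]
    rw [← mul_assoc (ι ℝ v * z) (ι ℝ v) z', aux_iota_sandwich v hz, zero_mul]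
  · -- dimension
    set f : {T : Finset (Fin n) // T.card = m + 1 ∧ (0 : Fin n) ∈ T} →
        ExteriorAlgebra ℝ (Fin n → ℝ) :=
      fun T => ιMulti_family ℝ (m + 1) (⇑b) ⟨T.1, T.2.1⟩ with hf
    have hf_li : LinearIndependent ℝ f := by
      have hinj : Function.Injective
          (fun (T : {T : Finset (Fin n) // T.card = m + 1 ∧ (0 : Fin n) ∈ T}) =>
            (⟨T.1, T.2.1⟩ : {T : Finset (Fin n) // T.card = m + 1})) := by
        intro T T' h
        simp only [Subtype.mk.injEq] at h
        exact Subtype.ext h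
      exact (aux_family_li b (m + 1)).comp _ hinj
    -- W is the span of f
    have hle1 : Submodule.span ℝ (Set.range f) ≤ W := by
      rw [Submodule.span_le]
      rintro _ ⟨T, rfl⟩
      set σ : Fin (m + 1) → Fin n := fun i => ((T.1.orderIsoOfFin T.2.1) i : Fin n) with hσ
      have hσ0 : σ 0 = 0 := by
        obtain ⟨j, hj⟩ := (T.1.orderIsoOfFin T.2.1).surjective ⟨0, T.2.2⟩
        have h1 : σ j = 0 := by rw [hσ]; exact congrArg Subtype.val hj
        have h2 : σ 0 ≤ σ j := by
          have := (T.1.orderIsoOfFin T.2.1).monotone (Fin.zero_le j)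
          exact Subtype.coe_le_coe.mpr this
        rw [h1] at h2
        exact le_antisymm h2 (Fin.zero_le _)
      have hfT : f T = ι ℝ v * ιMulti ℝ m (Matrix.vecTail (fun i => b (σ i))) := by
        show ιMulti ℝ (m + 1) (fun i => b (σ i))
            = ι ℝ v * ιMulti ℝ m (Matrix.vecTail (fun i => b (σ i)))
        rw [ιMulti_succ_apply]
        congr 1
        rw [hσ0, hb]
      rw [hWdef, hfT]
      exact ⟨ιMulti ℝ m (Matrix.vecTail (fun i => b (σ i))),
        ιMulti_range ℝ m (Set.mem_range_self _), rfl⟩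
    have hle2 : W ≤ Submodule.span ℝ (Set.range f) := by
      rw [hWdef, ← ιMulti_span_fixedDegree, Submodule.map_span, Submodule.span_le]
      rintro _ ⟨_, ⟨w, rfl⟩, rfl⟩
      rw [LinearMap.mulLeft_apply]
      set u : Fin (m + 1) → (Fin n → ℝ) := Matrix.vecCons v w with hu
      have hmain : ι ℝ v * ιMulti ℝ m w = ιMulti ℝ (m + 1) u := by
        rw [ιMulti_succ_apply]
        simp only [hu, Matrix.cons_val_zero, Matrix.tail_cons]
      rw [hmain]
      have hrepr : u = fun i => ∑ j : Fin n, b.repr (u i) j • b j := by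
        funext i
        rw [Basis.sum_repr]
      have hexp : ιMulti ℝ (m + 1) u = ∑ p : Fin (m + 1) → Fin n,
          (∏ i, b.repr (u i) (p i)) • ιMulti ℝ (m + 1) (fun i => b (p i)) := by
        conv_lhs => rw [hrepr]
        rw [show (ιMulti ℝ (m + 1)) (fun i => ∑ j : Fin n, b.repr (u i) j • b j)
            = (ιMulti ℝ (m + 1)).toMultilinearMap (fun i => ∑ j : Fin n, b.repr (u i) j • b j)
            from rfl]
        rw [MultilinearMap.map_sum]
        refine Finset.sum_congr rfl fun p _ => ?_
        exact MultilinearMap.map_smul_univ _ _ _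
      rw [hexp]
      refine Submodule.sum_mem _ fun p _ => ?_
      by_cases hp0 : p 0 = 0
      · by_cases hpi : Function.Injective p
        · -- genuinely a basis monomial containing 0
          set T : Finset (Fin n) := Finset.image p Finset.univ with hT
          have hTcard : T.card = m + 1 := by
            rw [hT, Finset.card_image_of_injective _ hpi, Finset.card_univ, Fintype.card_fin]
          have hT0 : (0 : Fin n) ∈ T := by
            rw [hT]
            exact Finset.mem_image.2 ⟨0, Finset.mem_univ _, hp0⟩
          have hmem : ∀ i, p i ∈ T := fun i => Finset.mem_image_of_mem _ (Finset.mem_univ _)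
          set π0 : Fin (m + 1) → Fin (m + 1) :=
            fun i => (T.orderIsoOfFin hTcard).symm ⟨p i, hmem i⟩ with hπ0
          have hπ0inj : Function.Injective π0 := by
            intro i j h
            apply hpi
            have := congrArg (fun x => ((T.orderIsoOfFin hTcard) x : Fin n)) h
            simpa [hπ0, OrderIso.apply_symm_apply] using this
          let π : Equiv.Perm (Fin (m + 1)) :=
            Equiv.ofBijective π0 (Finite.injective_iff_bijective.mp hπ0inj)
          have hcomp : (fun i => b (p i))
              = (fun i => b ((T.orderIsoOfFin hTcard i : Fin n))) ∘ π := by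
            funext i
            have : ((T.orderIsoOfFin hTcard) (π i) : Fin n) = p i := by
              show ((T.orderIsoOfFin hTcard) (π0 i) : Fin n) = p i
              rw [hπ0, OrderIso.apply_symm_apply]
            simp only [Function.comp_apply, this]
          rw [hcomp, AlternatingMap.map_perm]
          refine Submodule.smul_mem _ _ (Submodule.smul_mem _ _ (Submodule.subset_span ?_))
          exact ⟨⟨T, hTcard, hT0⟩, rfl⟩
        · -- repeated index: the wedge vanishes
          have : ¬ Function.Injective (fun i => b (p i)) := by
            intro hinj
            exact hpi fun i j h => hinj (show b (p i) = b (p j) from congrArg b h)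
          rw [AlternatingMap.map_eq_zero_of_not_injective _ _ this, smul_zero]
          exact Submodule.zero_mem _
      · -- the coefficient vanishes since `u 0 = v = b 0`
        have hco : b.repr (u 0) (p 0) = 0 := by
          rw [hu, show Matrix.vecCons v w 0 = v from rfl, ← hb, Basis.repr_self_apply,
            if_neg (fun h => hp0 h.symm)]
        rw [Finset.prod_eq_zero (Finset.mem_univ 0) hco, zero_smul]
        exact Submodule.zero_mem _
    have hW : W = Submodule.span ℝ (Set.range f) := le_antisymm hle2 hle1
    rw [hW, finrank_span_eq_card hf_li]
    -- count subsets of `Fin n` of cardinality `m+1` containing `0`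
    rw [Fintype.card_subtype]
    rw [show (Finset.filter (fun T : Finset (Fin n) => T.card = m + 1 ∧ (0 : Fin n) ∈ T)
        Finset.univ).card = (Finset.powersetCard m (Finset.univ.erase (0 : Fin n))).card from ?_]
    · rw [Finset.card_powersetCard, Finset.card_erase_of_mem (Finset.mem_univ _),
        Finset.card_univ, Fintype.card_fin]
    · refine Finset.card_bij' (fun T _ => T.erase 0) (fun S _ => insert 0 S) ?_ ?_ ?_ ?_
      · intro T hT
        rw [Finset.mem_filter] at hT
        rw [Finset.mem_powersetCard]
        exact ⟨Finset.erase_subset_erase _ (Finset.subset_univ _),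
          by rw [Finset.card_erase_of_mem hT.2.2, hT.2.1]; omega⟩
      · intro S hS
        rw [Finset.mem_powersetCard] at hS
        have h0S : (0 : Fin n) ∉ S := fun h => (Finset.mem_erase.mp (hS.1 h)).1 rfl
        rw [Finset.mem_filter]
        exact ⟨Finset.mem_univ _,
          by rw [Finset.card_insert_of_notMem h0S, hS.2], Finset.mem_insert_self _ _⟩
      · intro T hT
        rw [Finset.mem_filter] at hT
        exact Finset.insert_erase hT.2.2
      · intro S hS
        rw [Finset.mem_powersetCard] at hS
        exact Finset.erase_insert (fun h => (Finset.mem_erase.mp (hS.1 h)).1 rfl)
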